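/- Let 0 < τ < √2, α = 1 − τ²/2, β = √(τ² − τ⁴/4), and I(η) = Pr_{X,Y ~ N(0,1), independent}[X ≥ η and αX + βY ≥ η]. Define Ω(η) = 2·Φ_c(η)·Φ_c((1−α)η/β) − I(η) − ((1−α)/β)·e^{(α(1−α)/β²)·η²}·Φ_c(η)². Then Ω′(η) = −(2α(1−α)²/β³)·e^{(α(1−α)/β²)·η²}·Φ_c(η)²·η ≤ 0 for all η ≥ 0, lim_{η → ∞} Ω(η) = 0, and consequently Ω(η) ≥ 0 for all η ≥ 0. -/

import Mathlib

open MeasureTheory ProbabilityTheory Real Filter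

noncomputable section

/-- `Φ_c(η) = Pr_{X ~ N(0,1)}[X ≥ η]`. -/
def gaussTail (η : ℝ) : ℝ := (gaussianReal 0 1 (Set.Ici η)).toReal

/-- `I(η) = Pr[X ≥ η ∧ αX + βY ≥ η]` for independent standard Gaussians `X, Y`. -/
def jointTail (α β η : ℝ) : ℝ :=
  (((gaussianReal 0 1).prod (gaussianReal 0 1))
      {z : ℝ × ℝ | η ≤ z.1 ∧ η ≤ α * z.1 + β * z.2}).toReal

/-- `Ω(η) = 2 Φ_c(η) Φ_c((1-α)η/β) - I(η) - ((1-α)/β) e^{(α(1-α)/β²)η²} Φ_c(η)²`. -/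
def OmegaFn (α β η : ℝ) : ℝ :=
  2 * gaussTail η * gaussTail ((1 - α) * η / β) - jointTail α β η
    - (1 - α) / β * Real.exp (α * (1 - α) / β ^ 2 * η ^ 2) * (gaussTail η) ^ 2

def phi (x : ℝ) : ℝ := gaussianPDFReal 0 1 x


lemma phi_def (x : ℝ) : phi x = (Real.sqrt (2 * π))⁻¹ * Real.exp (-x ^ 2 / 2) := by
  simp [phi, gaussianPDFReal]

lemma phi_pos (x : ℝ) : 0 < phi x := gaussianPDFReal_pos 0 1 x one_ne_zero

lemma continuous_phi : Continuous phi := by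
  rw [funext phi_def]
  continuity

lemma integrable_phi : Integrable phi := integrable_gaussianPDFReal 0 1

lemma gaussTail_eq (η : ℝ) : gaussTail η = ∫ x in Set.Ioi η, phi x := by
  rw [gaussTail, gaussianReal_apply_eq_integral 0 one_ne_zero,
    ENNReal.toReal_ofReal (integral_nonneg fun x => gaussianPDFReal_nonneg 0 1 x),
    MeasureTheory.integral_Ici_eq_integral_Ioi]
  rfl

lemma gaussTail_nonneg (η : ℝ) : 0 ≤ gaussTail η := ENNReal.toReal_nonneg

lemma gaussTail_le_one (η : ℝ) : gaussTail η ≤ 1 := by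
  rw [gaussTail]
  have := prob_le_one (μ := gaussianReal 0 1) (s := Set.Ici η)
  exact ENNReal.toReal_le_of_le_ofReal one_pos.le (by simpa using this)

lemma gaussTail_sub (a b : ℝ) : gaussTail b = gaussTail a - ∫ x in a..b, phi x := by
  have key : ∀ u v : ℝ, u ≤ v → gaussTail u = (∫ x in Set.Ioc u v, phi x) + gaussTail v := by
    intro u v huv
    rw [gaussTail_eq, gaussTail_eq, ← Set.Ioc_union_Ioi_eq_Ioi huv,
      MeasureTheory.setIntegral_union (Set.Ioc_disjoint_Ioi le_rfl) measurableSet_Ioi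
        integrable_phi.integrableOn integrable_phi.integrableOn]
  rcases le_total a b with h | h
  · rw [intervalIntegral.integral_of_le h]
    have := key a b h
    linarith
  · rw [intervalIntegral.integral_of_ge h]
    have := key b a h
    linarith

lemma hasDerivAt_gaussTail (η : ℝ) : HasDerivAt gaussTail (-phi η) η := by
  have h : gaussTail = fun b => gaussTail 0 + ∫ x in (0:ℝ)..b, (-phi) x := by
    funext b
    rw [gaussTail_sub 0 b]
    simp [intervalIntegral.integral_neg]
    ring
  rw [h]
  have : HasDerivAt (fun b => ∫ x in (0:ℝ)..b, (-phi) x) (-phi η) η :=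
    intervalIntegral.integral_hasDerivAt_right
      ((continuous_phi.neg).intervalIntegrable 0 η)
      ((continuous_phi.neg).stronglyMeasurableAtFilter _ _)
      (continuous_phi.neg).continuousAt
  simpa using this.const_add (gaussTail 0)

lemma continuous_gaussTail : Continuous gaussTail :=
  continuous_iff_continuousAt.2 fun x => (hasDerivAt_gaussTail x).continuousAt

lemma phi_le (x : ℝ) : phi x ≤ (Real.sqrt (2 * π))⁻¹ := by
  rw [phi_def]
  have h1 : Real.exp (-x ^ 2 / 2) ≤ 1 := by
    rw [Real.exp_le_one_iff]
    nlinarith [sq_nonneg x]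
  have h2 : (0:ℝ) < (Real.sqrt (2 * π))⁻¹ := by
    positivity
  nlinarith

lemma gaussTail_le (η : ℝ) (hη : 0 ≤ η) : gaussTail η ≤ Real.exp (-η ^ 2 / 2) := by
  rw [gaussTail_eq]
  have hb : ∀ x ∈ Set.Ioi η, phi x ≤ Real.exp (-η^2/2) * phi (x - η) := by
    intro x hx
    have hxη : η ≤ x := le_of_lt hx
    rw [phi_def, phi_def, ← mul_assoc, mul_comm (Real.exp _), mul_assoc, ← Real.exp_add]
    apply mul_le_mul_of_nonneg_left _ (by positivity)
    apply Real.exp_le_exp.2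
    nlinarith [sq_nonneg (x - η), sq_nonneg η]
  calc (∫ x in Set.Ioi η, phi x) ≤ ∫ x in Set.Ioi η, Real.exp (-η^2/2) * phi (x - η) := by
        apply setIntegral_mono_on integrable_phi.integrableOn
          (((integrable_phi.comp_sub_right η).const_mul _).integrableOn)
          measurableSet_Ioi hb
    _ ≤ ∫ x, Real.exp (-η^2/2) * phi (x - η) := by
        apply setIntegral_le_integral ((integrable_phi.comp_sub_right η).const_mul _)
        filter_upwards with x
        exact mul_nonneg (Real.exp_nonneg _) (phi_pos _).le
    _ = Real.exp (-η^2/2) := by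
        rw [MeasureTheory.integral_const_mul, integral_sub_right_eq_self phi η]
        simp only [phi]
        rw [ProbabilityTheory.integral_gaussianPDFReal_eq_one 0 one_ne_zero, mul_one]

lemma tendsto_gaussTail : Tendsto gaussTail atTop (nhds 0) := by
  apply squeeze_zero' (Eventually.of_forall fun η => gaussTail_nonneg η)
    (eventually_atTop.2 ⟨0, fun η hη => gaussTail_le η hη⟩)
  have : Tendsto (fun η : ℝ => Real.exp (-η ^ 2 / 2)) atTop (nhds 0) := by
    apply Real.tendsto_exp_atBot.comp
    apply Filter.Tendsto.atBot_div_const two_pos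
    apply tendsto_neg_atBot_iff.2
    exact tendsto_pow_atTop two_ne_zero
  exact this

lemma gaussianReal_Ici (t : ℝ) : gaussianReal 0 1 (Set.Ici t) = ENNReal.ofReal (gaussTail t) :=
  (ENNReal.ofReal_toReal (measure_ne_top _ _)).symm

lemma jointTail_eq (α β : ℝ) (hβ : 0 < β) (η : ℝ) :
    jointTail α β η = ∫ x in Set.Ioi η, phi x * gaussTail ((η - α * x) / β) := by
  set μ := gaussianReal 0 1 with hμ
  set S : Set (ℝ × ℝ) := {z : ℝ × ℝ | η ≤ z.1 ∧ η ≤ α * z.1 + β * z.2} with hS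
  have hSm : MeasurableSet S := by
    apply MeasurableSet.inter
    · exact measurableSet_le measurable_const measurable_fst
    · exact measurableSet_le measurable_const
        ((measurable_fst.const_mul α).add (measurable_snd.const_mul β))
  set G : ℝ → ℝ := Set.indicator (Set.Ici η) (fun x => gaussTail ((η - α * x) / β)) with hG
  have hsec : ∀ x : ℝ, μ (Prod.mk x ⁻¹' S) = ENNReal.ofReal (G x) := by
    intro x
    by_cases hx : η ≤ x
    · have h1 : Prod.mk x ⁻¹' S = Set.Ici ((η - α * x) / β) := by
        ext y
        simp only [S, Set.mem_preimage, Set.mem_setOf_eq, Set.mem_Ici, hx, true_and]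
        rw [div_le_iff₀ hβ]
        constructor <;> intro h <;> nlinarith
      rw [h1, gaussianReal_Ici, hG, Set.indicator_of_mem (Set.mem_Ici.2 hx)]
    · have h1 : Prod.mk x ⁻¹' S = ∅ := by
        ext y
        simp only [S, Set.mem_preimage, Set.mem_setOf_eq, Set.mem_empty_iff_false, iff_false]
        tauto
      rw [h1, hG, Set.indicator_of_notMem (by simpa using hx)]
      simp
  have hGm : Measurable G := by
    apply Measurable.indicator _ measurableSet_Ici
    exact continuous_gaussTail.measurable.comp (by fun_prop)
  have hprod : (μ.prod μ) S = ∫⁻ x, ENNReal.ofReal (phi x * G x) := by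
    rw [Measure.prod_apply hSm]
    simp_rw [hsec]
    rw [hμ, gaussianReal_of_var_ne_zero 0 one_ne_zero,
      lintegral_withDensity_eq_lintegral_mul _ (measurable_gaussianPDF 0 1)
        (by exact ENNReal.measurable_ofReal.comp hGm)]
    congr 1
    funext x
    simp only [Pi.mul_apply, gaussianPDF]
    rw [← ENNReal.ofReal_mul (gaussianPDFReal_nonneg 0 1 x)]
    rfl
  have hnn : 0 ≤ᵐ[volume] fun x => phi x * G x := by
    filter_upwards with x
    have : 0 ≤ G x := by
      apply Set.indicator_nonneg
      intros; exact ENNReal.toReal_nonneg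
    exact mul_nonneg (phi_pos x).le this
  have hmeas : AEStronglyMeasurable (fun x => phi x * G x) volume :=
    ((measurable_gaussianPDFReal 0 1).mul hGm).aestronglyMeasurable
  rw [jointTail]
  rw [show (((gaussianReal 0 1).prod (gaussianReal 0 1)) {z : ℝ × ℝ | η ≤ z.1 ∧ η ≤ α * z.1 + β * z.2}) = (μ.prod μ) S from rfl]
  rw [hprod, ← integral_eq_lintegral_of_nonneg_ae hnn hmeas]
  have : ∀ x : ℝ, phi x * G x = Set.indicator (Set.Ici η) (fun x => phi x * gaussTail ((η - α * x) / β)) x := by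
    intro x
    rw [hG, ← Set.indicator_mul_right]
  simp_rw [this]
  rw [integral_indicator measurableSet_Ici, MeasureTheory.integral_Ici_eq_integral_Ioi]

lemma setIntegral_Ioi_comp_add (f : ℝ → ℝ) (a c : ℝ) :
    ∫ x in Set.Ioi a, f (x + c) = ∫ x in Set.Ioi (a + c), f x := by
  rw [← integral_indicator measurableSet_Ioi, ← integral_indicator measurableSet_Ioi,
    ← integral_add_right_eq_self (Set.indicator (Set.Ioi (a + c)) f) c]
  congr 1
  funext x
  by_cases hx : a < x
  · rw [Set.indicator_of_mem (Set.mem_Ioi.2 hx),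
      Set.indicator_of_mem (Set.mem_Ioi.2 (by linarith))]
  · rw [Set.indicator_of_notMem (by simpa using hx),
      Set.indicator_of_notMem (by simp only [Set.mem_Ioi]; intro h; exact hx (by linarith))]

lemma jointTail_eq' (α β : ℝ) (hβ : 0 < β) (η : ℝ) :
    jointTail α β η = ∫ u in Set.Ioi (0:ℝ), phi (u + η) * gaussTail (((1 - α) * η - α * u) / β) := by
  have hshift := setIntegral_Ioi_comp_add (fun x => phi x * gaussTail ((η - α * x) / β)) 0 η
  rw [zero_add] at hshift
  rw [jointTail_eq α β hβ η, ← hshift]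
  apply setIntegral_congr_fun measurableSet_Ioi
  intro u _
  simp only
  congr 2
  ring

lemma hasDerivAt_phi (x : ℝ) : HasDerivAt phi (-x * phi x) x := by
  have h : phi = fun y => (Real.sqrt (2 * π))⁻¹ * Real.exp (-y ^ 2 / 2) := funext phi_def
  rw [h]
  have h1 : HasDerivAt (fun y : ℝ => -y ^ 2 / 2) (-x) x := by
    have := ((hasDerivAt_pow 2 x).neg).div_const 2
    simpa using this.congr_deriv (by ring)
  have h2 := (h1.exp).const_mul (Real.sqrt (2 * π))⁻¹
  refine h2.congr_deriv ?_
  ring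

lemma integrable_linear_gauss (C : ℝ) :
    Integrable (fun v : ℝ => (|v| + C) * Real.exp (-v ^ 2 / 2)) := by
  have h0 : ∀ v : ℝ, (|v| + C) * Real.exp (-v ^ 2 / 2)
      = |v| * Real.exp (-v ^ 2 / 2) + C * Real.exp (-v ^ 2 / 2) := by
    intro v; ring
  rw [funext h0]
  have h1 : Integrable (fun v : ℝ => v * Real.exp (-(1/2 : ℝ) * v ^ 2)) := by
    have := integrable_rpow_mul_exp_neg_mul_sq (b := (1/2 : ℝ)) (by norm_num)
      (s := 1) (by norm_num)
    simpa [Real.rpow_one] using this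
  have h1' : Integrable (fun v : ℝ => |v| * Real.exp (-v ^ 2 / 2)) := by
    have := h1.abs
    apply this.congr
    filter_upwards with v
    rw [abs_mul, abs_of_nonneg (Real.exp_nonneg _)]
    congr 2
    ring
  have h2 : Integrable (fun v : ℝ => C * Real.exp (-v ^ 2 / 2)) := by
    have := (integrable_exp_neg_mul_sq (b := (1/2 : ℝ)) (by norm_num)).const_mul C
    apply this.congr
    filter_upwards with v
    congr 2
    ring
  exact h1'.add h2

lemma integrable_linear_gauss_shift (A C : ℝ) :
    Integrable (fun u : ℝ => (|u - A| + C) * Real.exp (-(u - A) ^ 2 / 2)) :=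
  (integrable_linear_gauss C).comp_sub_right A

lemma phi_bound (A : ℝ) {u t : ℝ} (hu : 0 ≤ u) (ht : |t| ≤ A) :
    phi (u + t) ≤ (Real.sqrt (2 * π))⁻¹ * (Real.exp (A ^ 2 / 2) * Real.exp (-(u - A) ^ 2 / 2)) := by
  rw [phi_def, ← Real.exp_add]
  apply mul_le_mul_of_nonneg_left _ (by positivity)
  apply Real.exp_le_exp.2
  rcases abs_le.1 ht with ⟨h1, h2⟩
  nlinarith [mul_nonneg hu (by linarith : (0:ℝ) ≤ t + A), sq_nonneg t]

section main
variable {α β : ℝ} (hα0 : 0 < α) (hα1 : α < 1) (hβ : 0 < β) (hab : α ^ 2 + β ^ 2 = 1)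

lemma gauss_prod (hβ : 0 < β) (hab : α ^ 2 + β ^ 2 = 1) (η u : ℝ) :
    phi (u + η) * phi (((1 - α) * η - α * u) / β)
      = phi η * ((Real.sqrt (2 * π))⁻¹ * Real.exp (-((u + (1 - α) * η) / β) ^ 2 / 2)) := by
  rw [phi_def, phi_def, phi_def]
  rw [mul_mul_mul_comm, ← Real.exp_add, mul_mul_mul_comm, ← Real.exp_add]
  congr 1
  have hβ2 : β ^ 2 = 1 - α ^ 2 := by linarith
  have hβne : β ≠ 0 := ne_of_gt hβ
  rw [Real.exp_eq_exp]
  field_simp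
  linear_combination (-(2*u*η) - u^2) * hab

lemma integrable_gauss_exp_aux (hβ : 0 < β) (m : ℝ) :
    Integrable (fun u : ℝ => (Real.sqrt (2 * π))⁻¹ * Real.exp (-((u + m) / β) ^ 2 / 2)) := by
  have h : Integrable (fun u : ℝ => Real.exp (-(1 / (2 * β ^ 2)) * u ^ 2)) :=
    integrable_exp_neg_mul_sq (by positivity)
  have h2 := (h.comp_sub_right (-m)).const_mul (Real.sqrt (2 * π))⁻¹
  apply h2.congr
  filter_upwards with u
  simp only [sub_neg_eq_add]
  congr 1
  rw [Real.exp_eq_exp, div_pow]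
  field_simp

lemma integral_gauss_exp (hβ : 0 < β) (m : ℝ) :
    ∫ u in Set.Ioi (0:ℝ), (Real.sqrt (2 * π))⁻¹ * Real.exp (-((u + m) / β) ^ 2 / 2)
      = β * gaussTail (m / β) := by
  have h1 : ∀ u : ℝ, (Real.sqrt (2 * π))⁻¹ * Real.exp (-((u + m) / β) ^ 2 / 2)
      = phi ((u + m) * β⁻¹) := by
    intro u
    rw [phi_def, ← div_eq_mul_inv]
  simp_rw [h1]
  have h2 := setIntegral_Ioi_comp_add (fun x => phi (x * β⁻¹)) 0 m
  rw [zero_add] at h2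
  rw [h2, integral_comp_mul_right_Ioi phi m (inv_pos.2 hβ), inv_inv, smul_eq_mul,
    ← gaussTail_eq, ← div_eq_mul_inv]

lemma integral_P (hα0 : 0 < α) (hα1 : α < 1) (hβ : 0 < β) (hab : α ^ 2 + β ^ 2 = 1) (η : ℝ) :
    ∫ u in Set.Ioi (0:ℝ), phi (u + η) * phi (((1 - α) * η - α * u) / β)
      = β * phi η * gaussTail ((1 - α) * η / β) := by
  simp_rw [gauss_prod hβ hab η]
  rw [MeasureTheory.integral_const_mul, integral_gauss_exp hβ ((1 - α) * η)]
  ring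

lemma integrable_P (hβ : 0 < β) (hab : α ^ 2 + β ^ 2 = 1) (η : ℝ) :
    Integrable (fun u : ℝ => phi (u + η) * phi (((1 - α) * η - α * u) / β)) := by
  simp_rw [gauss_prod hβ hab η]
  exact (integrable_gauss_exp_aux hβ ((1 - α) * η)).const_mul _

lemma tendsto_phi_top : Tendsto phi atTop (nhds 0) := by
  rw [funext phi_def]
  rw [show (0:ℝ) = (Real.sqrt (2 * π))⁻¹ * 0 by ring]
  apply Tendsto.const_mul
  apply Real.tendsto_exp_atBot.comp
  apply Filter.Tendsto.atBot_div_const two_pos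
  exact tendsto_neg_atBot_iff.2 (tendsto_pow_atTop two_ne_zero)

lemma integrable_gauss_shift (A : ℝ) :
    Integrable (fun u : ℝ => Real.exp (-(u - A) ^ 2 / 2)) := by
  have := (integrable_exp_neg_mul_sq (b := (1/2:ℝ)) (by norm_num)).comp_sub_right A
  apply this.congr
  filter_upwards with u
  congr 1
  ring

lemma hasDerivAt_K (hβ : 0 < β) (η u : ℝ) :
    HasDerivAt (fun t => phi (u + t) * gaussTail (((1 - α) * t - α * u) / β))
      ((-(u + η)) * phi (u + η) * gaussTail (((1 - α) * η - α * u) / β)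
        + phi (u + η) * (-((1 - α) / β) * phi (((1 - α) * η - α * u) / β))) η := by
  have ha : HasDerivAt (fun t : ℝ => u + t) 1 η := (hasDerivAt_id η).const_add u
  have h1 : HasDerivAt (fun t => phi (u + t)) (-(u + η) * phi (u + η)) η := by
    exact ((hasDerivAt_phi (u + η)).comp η ha).congr_deriv (by ring)
  have hb : HasDerivAt (fun t : ℝ => ((1 - α) * t - α * u) / β) ((1 - α) / β) η := by
    simpa using (((hasDerivAt_id η).const_mul (1 - α)).sub_const (α * u)).div_const β
  have h2 : HasDerivAt (fun t => gaussTail (((1 - α) * t - α * u) / β))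
      (-phi (((1 - α) * η - α * u) / β) * ((1 - α) / β)) η :=
    (hasDerivAt_gaussTail _).comp η hb
  have := h1.mul h2
  refine this.congr_deriv ?_
  ring

lemma hasDerivAt_W (hβ : 0 < β) (η u : ℝ) :
    HasDerivAt (fun v => phi (v + η) * gaussTail (((1 - α) * η - α * v) / β))
      ((-(u + η)) * phi (u + η) * gaussTail (((1 - α) * η - α * u) / β)
        + phi (u + η) * ((α / β) * phi (((1 - α) * η - α * u) / β))) u := by
  have ha : HasDerivAt (fun v : ℝ => v + η) 1 u := (hasDerivAt_id u).add_const η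
  have h1 : HasDerivAt (fun v => phi (v + η)) (-(u + η) * phi (u + η)) u := by
    exact ((hasDerivAt_phi (u + η)).comp u ha).congr_deriv (by ring)
  have hb : HasDerivAt (fun v : ℝ => ((1 - α) * η - α * v) / β) (-α / β) u := by
    have : HasDerivAt (fun v : ℝ => (1 - α) * η - α * v) (-α) u := by
      simpa using ((hasDerivAt_id u).const_mul α).const_sub ((1 - α) * η)
    simpa using this.div_const β
  have h2 : HasDerivAt (fun v => gaussTail (((1 - α) * η - α * v) / β))
      (-phi (((1 - α) * η - α * u) / β) * (-α / β)) u :=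
    (hasDerivAt_gaussTail _).comp u hb
  have := h1.mul h2
  refine this.congr_deriv ?_
  ring

lemma integral_K' (hα0 : 0 < α) (hα1 : α < 1) (hβ : 0 < β) (hab : α ^ 2 + β ^ 2 = 1) (η : ℝ)
    (hint : IntegrableOn (fun u => (-(u + η)) * phi (u + η) * gaussTail (((1 - α) * η - α * u) / β)
      + phi (u + η) * (-((1 - α) / β) * phi (((1 - α) * η - α * u) / β))) (Set.Ioi 0)) :
    (∫ u in Set.Ioi (0:ℝ), ((-(u + η)) * phi (u + η) * gaussTail (((1 - α) * η - α * u) / β)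
      + phi (u + η) * (-((1 - α) / β) * phi (((1 - α) * η - α * u) / β))))
      = -2 * phi η * gaussTail ((1 - α) * η / β) := by
  set K' : ℝ → ℝ := fun u => (-(u + η)) * phi (u + η) * gaussTail (((1 - α) * η - α * u) / β)
      + phi (u + η) * (-((1 - α) / β) * phi (((1 - α) * η - α * u) / β)) with hK'
  set P : ℝ → ℝ := fun u => phi (u + η) * phi (((1 - α) * η - α * u) / β) with hP
  have hPint : Integrable P := integrable_P hβ hab η
  have hW'eq : ∀ u : ℝ, K' u + (1 / β) * P u
      = (-(u + η)) * phi (u + η) * gaussTail (((1 - α) * η - α * u) / β)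
        + phi (u + η) * ((α / β) * phi (((1 - α) * η - α * u) / β)) := by
    intro u
    simp only [hK', hP]
    field_simp
    ring
  have hW'int : IntegrableOn (fun u => K' u + (1 / β) * P u) (Set.Ioi 0) :=
    hint.add ((hPint.const_mul (1 / β)).integrableOn)
  have hderiv : ∀ u ∈ Set.Ici (0:ℝ),
      HasDerivAt (fun v => phi (v + η) * gaussTail (((1 - α) * η - α * v) / β))
        (K' u + (1 / β) * P u) u := by
    intro u _
    rw [hW'eq u]
    exact hasDerivAt_W hβ η u
  have htend : Tendsto (fun v => phi (v + η) * gaussTail (((1 - α) * η - α * v) / β))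
      atTop (nhds 0) := by
    apply squeeze_zero (fun v => mul_nonneg (phi_pos _).le (gaussTail_nonneg _))
      (g := fun v => phi (v + η))
    · intro v
      calc phi (v + η) * gaussTail (((1 - α) * η - α * v) / β)
          ≤ phi (v + η) * 1 := mul_le_mul_of_nonneg_left (gaussTail_le_one _) (phi_pos _).le
        _ = phi (v + η) := mul_one _
    · exact tendsto_phi_top.comp (tendsto_atTop_add_const_right atTop η tendsto_id)
  have hFTC := integral_Ioi_of_hasDerivAt_of_tendsto' hderiv hW'int htend
  rw [MeasureTheory.integral_add hint ((hPint.const_mul (1 / β)).integrableOn),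
    MeasureTheory.integral_const_mul] at hFTC
  have hPval : ∫ u in Set.Ioi (0:ℝ), P u = β * phi η * gaussTail ((1 - α) * η / β) :=
    integral_P hα0 hα1 hβ hab η
  rw [hPval] at hFTC
  have hW0 : phi ((0:ℝ) + η) * gaussTail (((1 - α) * η - α * 0) / β)
      = phi η * gaussTail ((1 - α) * η / β) := by norm_num
  rw [hW0] at hFTC
  have hβne : β ≠ 0 := ne_of_gt hβ
  have : (1 / β) * (β * phi η * gaussTail ((1 - α) * η / β))
      = phi η * gaussTail ((1 - α) * η / β) := by field_simp
  rw [this] at hFTC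
  linarith

lemma hasDerivAt_jointTail (hα0 : 0 < α) (hα1 : α < 1) (hβ : 0 < β) (hab : α ^ 2 + β ^ 2 = 1)
    (η₀ : ℝ) :
    HasDerivAt (jointTail α β) (-2 * phi η₀ * gaussTail ((1 - α) * η₀ / β)) η₀ := by
  have hrepr : jointTail α β
      = fun t => ∫ u in Set.Ioi (0:ℝ), phi (u + t) * gaussTail (((1 - α) * t - α * u) / β) :=
    funext (jointTail_eq' α β hβ)
  set c0 : ℝ := (Real.sqrt (2 * π))⁻¹ with hc0def
  have hc0 : 0 < c0 := by rw [hc0def]; positivity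
  set A : ℝ := |η₀| + 1 with hAdef
  have hA0 : 0 < A := by positivity
  set K' : ℝ → ℝ → ℝ := fun t u => (-(u + t)) * phi (u + t) * gaussTail (((1 - α) * t - α * u) / β)
      + phi (u + t) * (-((1 - α) / β) * phi (((1 - α) * t - α * u) / β)) with hK'
  set bound : ℝ → ℝ := fun u =>
    (c0 * Real.exp (A ^ 2 / 2)) * ((|u - A| + (2 * A + c0 / β + 1)) * Real.exp (-(u - A) ^ 2 / 2))
    with hbound
  have h_bd : ∀ u ∈ Set.Ioi (0:ℝ), ∀ t ∈ Metric.ball η₀ 1, ‖K' t u‖ ≤ bound u := by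
    intro u hu t ht
    have hu0 : (0:ℝ) ≤ u := (Set.mem_Ioi.1 hu).le
    have htA : |t| ≤ A := by
      rw [Metric.mem_ball, Real.dist_eq] at ht
      have := abs_sub_abs_le_abs_sub t η₀
      rw [hAdef]; linarith
    have hφb := phi_bound A hu0 htA
    have hφpos := phi_pos (u + t)
    have hTnn := gaussTail_nonneg (((1 - α) * t - α * u) / β)
    have hT1 := gaussTail_le_one (((1 - α) * t - α * u) / β)
    have hargφ := phi_le (((1 - α) * t - α * u) / β)
    have habs : |u + t| ≤ u + A := by
      calc |u + t| ≤ |u| + |t| := abs_add_le u t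
        _ ≤ u + A := by rw [abs_of_nonneg hu0]; linarith
    rw [Real.norm_eq_abs]
    have e1 : |(-(u + t)) * phi (u + t) * gaussTail (((1 - α) * t - α * u) / β)|
        ≤ (u + A) * phi (u + t) := by
      rw [abs_mul, abs_mul, abs_neg, abs_of_pos hφpos, abs_of_nonneg hTnn]
      calc |u + t| * phi (u + t) * gaussTail (((1 - α) * t - α * u) / β)
          ≤ |u + t| * phi (u + t) * 1 :=
            mul_le_mul_of_nonneg_left hT1 (mul_nonneg (abs_nonneg _) hφpos.le)
        _ = |u + t| * phi (u + t) := mul_one _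
        _ ≤ (u + A) * phi (u + t) := mul_le_mul_of_nonneg_right habs hφpos.le
    have e2 : |phi (u + t) * (-((1 - α) / β) * phi (((1 - α) * t - α * u) / β))|
        ≤ phi (u + t) * (c0 / β) := by
      rw [abs_mul, abs_of_pos hφpos, abs_mul, abs_neg]
      apply mul_le_mul_of_nonneg_left _ hφpos.le
      have h1α : (0:ℝ) < 1 - α := by linarith
      rw [abs_of_pos (div_pos h1α hβ), abs_of_pos (phi_pos _)]
      calc (1 - α) / β * phi (((1 - α) * t - α * u) / β)
          ≤ (1 - α) / β * c0 :=
            mul_le_mul_of_nonneg_left hargφ (div_pos h1α hβ).le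
        _ ≤ 1 / β * c0 := by
            apply mul_le_mul_of_nonneg_right _ hc0.le
            rw [div_eq_mul_inv, div_eq_mul_inv]
            apply mul_le_mul_of_nonneg_right (by linarith) (inv_pos.2 hβ).le
        _ = c0 / β := by ring
    calc |K' t u| ≤ |(-(u + t)) * phi (u + t) * gaussTail (((1 - α) * t - α * u) / β)|
          + |phi (u + t) * (-((1 - α) / β) * phi (((1 - α) * t - α * u) / β))| := abs_add_le _ _
      _ ≤ (u + A) * phi (u + t) + phi (u + t) * (c0 / β) := add_le_add e1 e2
      _ = (u + A + c0 / β) * phi (u + t) := by ring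
      _ ≤ (u + A + c0 / β) * (c0 * (Real.exp (A ^ 2 / 2) * Real.exp (-(u - A) ^ 2 / 2))) := by
          apply mul_le_mul_of_nonneg_left hφb
          have : 0 < c0 / β := div_pos hc0 hβ
          linarith
      _ ≤ (|u - A| + (2 * A + c0 / β + 1))
            * (c0 * (Real.exp (A ^ 2 / 2) * Real.exp (-(u - A) ^ 2 / 2))) := by
          apply mul_le_mul_of_nonneg_right _ (by positivity)
          have := abs_sub_abs_le_abs_sub u A
          have h2 : u ≤ |u - A| + A := by
            have := le_abs_self (u - A); linarith
          linarith
      _ = bound u := by rw [hbound]; ring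
  have bound_int : Integrable bound (volume.restrict (Set.Ioi (0:ℝ))) := by
    apply Integrable.restrict
    exact (integrable_linear_gauss_shift A (2 * A + c0 / β + 1)).const_mul (c0 * Real.exp (A ^ 2 / 2))
  have hmeasK : ∀ t : ℝ, AEStronglyMeasurable
      (fun u => phi (u + t) * gaussTail (((1 - α) * t - α * u) / β))
      (volume.restrict (Set.Ioi (0:ℝ))) := by
    intro t
    apply Continuous.aestronglyMeasurable
    exact (continuous_phi.comp (by fun_prop)).mul (continuous_gaussTail.comp (by fun_prop))
  have hmeasK' : AEStronglyMeasurable (K' η₀) (volume.restrict (Set.Ioi (0:ℝ))) := by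
    apply Continuous.aestronglyMeasurable
    rw [hK']
    apply Continuous.add
    · exact ((continuous_id.add continuous_const).neg.mul
        (continuous_phi.comp (by fun_prop))).mul (continuous_gaussTail.comp (by fun_prop))
    · exact (continuous_phi.comp (continuous_id.add continuous_const)).mul
        (continuous_const.mul (continuous_phi.comp
          ((continuous_const.sub (continuous_const.mul continuous_id)).div_const β)))
  have hFint : Integrable (fun u => phi (u + η₀) * gaussTail (((1 - α) * η₀ - α * u) / β))
      (volume.restrict (Set.Ioi (0:ℝ))) := by
    apply Integrable.mono'
      (g := fun u => c0 * Real.exp (A ^ 2 / 2) * Real.exp (-(u - A) ^ 2 / 2))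
      (((integrable_gauss_shift A).const_mul (c0 * Real.exp (A ^ 2 / 2))).restrict)
      (hmeasK η₀)
    filter_upwards [ae_restrict_mem measurableSet_Ioi] with u hu
    have hu0 : (0:ℝ) ≤ u := (Set.mem_Ioi.1 hu).le
    have htA : |η₀| ≤ A := by rw [hAdef]; linarith [abs_nonneg η₀]
    have hφb := phi_bound A hu0 htA
    rw [Real.norm_eq_abs, abs_mul, abs_of_pos (phi_pos _), abs_of_nonneg (gaussTail_nonneg _)]
    calc phi (u + η₀) * gaussTail (((1 - α) * η₀ - α * u) / β)
        ≤ phi (u + η₀) * 1 := mul_le_mul_of_nonneg_left (gaussTail_le_one _) (phi_pos _).le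
      _ = phi (u + η₀) := mul_one _
      _ ≤ c0 * Real.exp (A ^ 2 / 2) * Real.exp (-(u - A) ^ 2 / 2) :=
          le_trans hφb (le_of_eq (by rw [hc0def]; ring))
  have h_diff : ∀ᵐ u ∂(volume.restrict (Set.Ioi (0:ℝ))), ∀ t ∈ Metric.ball η₀ 1,
      HasDerivAt (fun t' => phi (u + t') * gaussTail (((1 - α) * t' - α * u) / β)) (K' t u) t := by
    filter_upwards with u t _
    exact hasDerivAt_K hβ t u
  have h_bd' : ∀ᵐ u ∂(volume.restrict (Set.Ioi (0:ℝ))), ∀ t ∈ Metric.ball η₀ 1,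
      ‖K' t u‖ ≤ bound u := by
    filter_upwards [ae_restrict_mem measurableSet_Ioi] with u hu t ht
    exact h_bd u hu t ht
  have key := hasDerivAt_integral_of_dominated_loc_of_deriv_le (Metric.ball_mem_nhds η₀ one_pos)
    (Eventually.of_forall fun t => hmeasK t) hFint hmeasK' h_bd' bound_int h_diff
  obtain ⟨hK'int, hD⟩ := key
  rw [hrepr]
  have hval := integral_K' hα0 hα1 hβ hab η₀ hK'int
  exact hval ▸ hD

section assemble
variable {α β : ℝ}

lemma exp_phi_key (hβ : 0 < β) (hab : α ^ 2 + β ^ 2 = 1) (η : ℝ) :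
    Real.exp (α * (1 - α) / β ^ 2 * η ^ 2) * phi η = phi ((1 - α) * η / β) := by
  rw [phi_def, phi_def, mul_comm, mul_assoc, ← Real.exp_add]
  congr 1
  rw [Real.exp_eq_exp]
  have hβne : β ≠ 0 := ne_of_gt hβ
  field_simp
  linear_combination (-η ^ 2) * hab

lemma hasDerivAt_OmegaFn (hα0 : 0 < α) (hα1 : α < 1) (hβ : 0 < β)
    (hab : α ^ 2 + β ^ 2 = 1) (η : ℝ) :
    HasDerivAt (OmegaFn α β)
      (-(2 * α * (1 - α) ^ 2 / β ^ 3) * Real.exp (α * (1 - α) / β ^ 2 * η ^ 2)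
        * (gaussTail η) ^ 2 * η) η := by
  have h1 : HasDerivAt gaussTail (-phi η) η := hasDerivAt_gaussTail η
  have hinner : HasDerivAt (fun t : ℝ => (1 - α) * t / β) ((1 - α) / β) η := by
    simpa using ((hasDerivAt_id η).const_mul (1 - α)).div_const β
  have h2 : HasDerivAt (fun t => gaussTail ((1 - α) * t / β))
      (-phi ((1 - α) * η / β) * ((1 - α) / β)) η :=
    (hasDerivAt_gaussTail _).comp η hinner
  have hexp_inner : HasDerivAt (fun t : ℝ => α * (1 - α) / β ^ 2 * t ^ 2)
      (α * (1 - α) / β ^ 2 * (2 * η)) η := by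
    have := (hasDerivAt_pow 2 η).const_mul (α * (1 - α) / β ^ 2)
    simpa using this.congr_deriv (by ring)
  have h3 : HasDerivAt (fun t => Real.exp (α * (1 - α) / β ^ 2 * t ^ 2))
      (Real.exp (α * (1 - α) / β ^ 2 * η ^ 2) * (α * (1 - α) / β ^ 2 * (2 * η))) η :=
    hexp_inner.exp
  have hJ := hasDerivAt_jointTail hα0 hα1 hβ hab η
  have hterm1 : HasDerivAt (fun t => 2 * gaussTail t * gaussTail ((1 - α) * t / β))
      (2 * (-phi η) * gaussTail ((1 - α) * η / β)
        + 2 * gaussTail η * (-phi ((1 - α) * η / β) * ((1 - α) / β))) η :=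
    (h1.const_mul 2).mul h2
  have hterm3 : HasDerivAt (fun t => (1 - α) / β * Real.exp (α * (1 - α) / β ^ 2 * t ^ 2)
        * (gaussTail t) ^ 2)
      (((1 - α) / β * (Real.exp (α * (1 - α) / β ^ 2 * η ^ 2) * (α * (1 - α) / β ^ 2 * (2 * η))))
          * (gaussTail η) ^ 2
        + (1 - α) / β * Real.exp (α * (1 - α) / β ^ 2 * η ^ 2)
          * (2 * gaussTail η ^ 1 * (-phi η))) η := by
    exact (h3.const_mul ((1 - α) / β)).mul (h1.pow 2)
  have hall := (hterm1.sub hJ).sub hterm3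
  have : OmegaFn α β = fun t => 2 * gaussTail t * gaussTail ((1 - α) * t / β)
      - jointTail α β t
      - (1 - α) / β * Real.exp (α * (1 - α) / β ^ 2 * t ^ 2) * (gaussTail t) ^ 2 := rfl
  rw [this]
  refine hall.congr_deriv ?_
  have hkey := exp_phi_key hβ hab η
  have hβne : β ≠ 0 := ne_of_gt hβ
  rw [← hkey]
  generalize Real.exp (α * (1 - α) / β ^ 2 * η ^ 2) = E
  field_simp
  ring

lemma jointTail_nonneg (η : ℝ) : 0 ≤ jointTail α β η := ENNReal.toReal_nonneg

lemma jointTail_le_gaussTail (η : ℝ) : jointTail α β η ≤ gaussTail η := by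
  rw [jointTail, gaussTail]
  apply ENNReal.toReal_mono (measure_ne_top _ _)
  have hsub : {z : ℝ × ℝ | η ≤ z.1 ∧ η ≤ α * z.1 + β * z.2} ⊆ (Set.Ici η) ×ˢ Set.univ := by
    intro z hz
    exact ⟨hz.1, Set.mem_univ _⟩
  calc ((gaussianReal 0 1).prod (gaussianReal 0 1)) {z : ℝ × ℝ | η ≤ z.1 ∧ η ≤ α * z.1 + β * z.2}
      ≤ ((gaussianReal 0 1).prod (gaussianReal 0 1)) ((Set.Ici η) ×ˢ Set.univ) :=
        measure_mono hsub
    _ = gaussianReal 0 1 (Set.Ici η) := by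
        rw [Measure.prod_prod, measure_univ, mul_one]

lemma tendsto_OmegaFn (hα0 : 0 < α) (hα1 : α < 1) (hβ : 0 < β) (hab : α ^ 2 + β ^ 2 = 1) :
    Tendsto (OmegaFn α β) atTop (nhds 0) := by
  have h1α : (0:ℝ) < 1 - α := by linarith
  have tT2 : Tendsto (fun η => gaussTail ((1 - α) * η / β)) atTop (nhds 0) := by
    apply tendsto_gaussTail.comp
    apply Tendsto.atTop_div_const hβ
    exact Tendsto.const_mul_atTop h1α tendsto_id
  have t1 : Tendsto (fun η => 2 * gaussTail η * gaussTail ((1 - α) * η / β)) atTop (nhds 0) := by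
    have := (tendsto_gaussTail.const_mul 2).mul tT2
    simpa using this
  have tJ : Tendsto (fun η => jointTail α β η) atTop (nhds 0) :=
    squeeze_zero (fun η => jointTail_nonneg η) (fun η => jointTail_le_gaussTail η) tendsto_gaussTail
  have t3 : Tendsto (fun η => (1 - α) / β * Real.exp (α * (1 - α) / β ^ 2 * η ^ 2)
      * (gaussTail η) ^ 2) atTop (nhds 0) := by
    have hklt : α * (1 - α) / β ^ 2 - 1 < 0 := by
      have hβ2 : β ^ 2 = 1 - α ^ 2 := by linarith
      rw [div_sub_one (by positivity)]
      apply div_neg_of_neg_of_pos _ (by positivity)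
      nlinarith
    apply squeeze_zero' (g := fun η => (1 - α) / β
        * Real.exp ((α * (1 - α) / β ^ 2 - 1) * η ^ 2))
    · filter_upwards with η
      positivity
    · filter_upwards [eventually_ge_atTop (0:ℝ)] with η hη
      have hT := gaussTail_le η hη
      have hTnn := gaussTail_nonneg η
      calc (1 - α) / β * Real.exp (α * (1 - α) / β ^ 2 * η ^ 2) * (gaussTail η) ^ 2
          ≤ (1 - α) / β * Real.exp (α * (1 - α) / β ^ 2 * η ^ 2) * (Real.exp (-η ^ 2 / 2)) ^ 2 := by
            apply mul_le_mul_of_nonneg_left _ (by positivity)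
            exact pow_le_pow_left₀ hTnn hT 2
        _ = (1 - α) / β * Real.exp ((α * (1 - α) / β ^ 2 - 1) * η ^ 2) := by
            rw [← Real.exp_nat_mul, mul_assoc, ← Real.exp_add]
            congr 2
            ring
    · rw [show (0:ℝ) = (1 - α) / β * 0 by ring]
      apply Tendsto.const_mul
      apply Real.tendsto_exp_atBot.comp
      apply Tendsto.const_mul_atTop_of_neg hklt
      exact tendsto_pow_atTop two_ne_zero
  have := (t1.sub tJ).sub t3
  rw [sub_zero, sub_zero] at this
  exact this



/-- For `0 < τ < √2`, `α = 1 - τ²/2`, `β = √(τ² - τ⁴/4)`: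
`Ω′(η) = -(2α(1-α)²/β³) e^{(α(1-α)/β²)η²} Φ_c(η)² η ≤ 0` for all `η ≥ 0`,
`Ω(η) → 0` as `η → ∞`, and consequently `Ω(η) ≥ 0` for all `η ≥ 0`. -/
theorem omega_nonneg (τ α β : ℝ) (hτ0 : 0 < τ) (hτ : τ < Real.sqrt 2)
    (hα : α = 1 - τ ^ 2 / 2) (hβ : β = Real.sqrt (τ ^ 2 - τ ^ 4 / 4)) :
    (∀ η : ℝ, 0 ≤ η →
        HasDerivAt (OmegaFn α β)
          (-(2 * α * (1 - α) ^ 2 / β ^ 3) * Real.exp (α * (1 - α) / β ^ 2 * η ^ 2)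
            * (gaussTail η) ^ 2 * η) η ∧
        -(2 * α * (1 - α) ^ 2 / β ^ 3) * Real.exp (α * (1 - α) / β ^ 2 * η ^ 2)
            * (gaussTail η) ^ 2 * η ≤ 0) ∧
      Tendsto (OmegaFn α β) atTop (nhds 0) ∧
      ∀ η : ℝ, 0 ≤ η → 0 ≤ OmegaFn α β η := by
  have hs2 : (Real.sqrt 2) ^ 2 = 2 := Real.sq_sqrt (by norm_num)
  have hτ2 : τ ^ 2 < 2 := by nlinarith [Real.sqrt_nonneg 2]
  have hα0 : 0 < α := by rw [hα]; linarith
  have hα1 : α < 1 := by rw [hα]; nlinarith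
  have hβpos : 0 < τ ^ 2 - τ ^ 4 / 4 := by nlinarith
  have hβ0 : 0 < β := by rw [hβ]; exact Real.sqrt_pos.2 hβpos
  have hβ2 : β ^ 2 = τ ^ 2 - τ ^ 4 / 4 := by rw [hβ]; exact Real.sq_sqrt hβpos.le
  have hab : α ^ 2 + β ^ 2 = 1 := by rw [hα, hβ2]; ring
  have part1 : ∀ η : ℝ, 0 ≤ η →
      HasDerivAt (OmegaFn α β)
        (-(2 * α * (1 - α) ^ 2 / β ^ 3) * Real.exp (α * (1 - α) / β ^ 2 * η ^ 2)
          * (gaussTail η) ^ 2 * η) η ∧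
      -(2 * α * (1 - α) ^ 2 / β ^ 3) * Real.exp (α * (1 - α) / β ^ 2 * η ^ 2)
          * (gaussTail η) ^ 2 * η ≤ 0 := by
    intro η hη
    refine ⟨hasDerivAt_OmegaFn hα0 hα1 hβ0 hab η, ?_⟩
    have hnn : 0 ≤ 2 * α * (1 - α) ^ 2 / β ^ 3 := by
      apply div_nonneg _ (by positivity)
      nlinarith [sq_nonneg (1 - α)]
    have hprod : 0 ≤ (2 * α * (1 - α) ^ 2 / β ^ 3) * Real.exp (α * (1 - α) / β ^ 2 * η ^ 2)
        * (gaussTail η) ^ 2 * η :=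
      mul_nonneg (mul_nonneg (mul_nonneg hnn (Real.exp_nonneg _)) (sq_nonneg _)) hη
    have heq : -(2 * α * (1 - α) ^ 2 / β ^ 3) * Real.exp (α * (1 - α) / β ^ 2 * η ^ 2)
        * (gaussTail η) ^ 2 * η
        = -((2 * α * (1 - α) ^ 2 / β ^ 3) * Real.exp (α * (1 - α) / β ^ 2 * η ^ 2)
          * (gaussTail η) ^ 2 * η) := by ring
    rw [heq]
    exact neg_nonpos.2 hprod
  refine ⟨part1, tendsto_OmegaFn hα0 hα1 hβ0 hab, ?_⟩
  intro η hη
  have hmono : AntitoneOn (OmegaFn α β) (Set.Ici η) := by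
    apply antitoneOn_of_deriv_nonpos (convex_Ici η)
    · intro x hx
      exact ((part1 x (le_trans hη hx)).1).continuousAt.continuousWithinAt
    · intro x hx
      rw [interior_Ici] at hx
      exact ((part1 x (le_trans hη (le_of_lt hx))).1).differentiableAt.differentiableWithinAt
    · intro x hx
      rw [interior_Ici] at hx
      have h := part1 x (le_trans hη (le_of_lt hx))
      rw [h.1.deriv]
      exact h.2
  apply le_of_tendsto (tendsto_OmegaFn hα0 hα1 hβ0 hab)
  filter_upwards [eventually_ge_atTop η] with t ht
  exact hmono Set.self_mem_Ici ht ht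

end assemble
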